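/- Let a_n be the number of permutations of length n avoiding the mesh pattern (12, {(0,1),(0,2),(1,0),(1,1),(1,2)}). Then a_0 = a_1 = 1 and a_n = (n−1)·a_{n−1} + (n−2)·a_{n−2} for all n ≥ 2. -/

import Mathlib

/-- 1-based position boundaries of an occurrence: `posOf x 0 = 0`,
`posOf x i = x_i` (1-based) for `1 ≤ i ≤ k`, and `posOf x i = n+1` for `i > k`. -/
def posOf {k n : ℕ} (x : Fin k → Fin n) (i : ℕ) : ℕ :=
  if h : 1 ≤ i ∧ i ≤ k then (x ⟨i - 1, by omega⟩ : ℕ) + 1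
  else if i = 0 then 0 else n + 1

/-- 1-based value boundaries of an occurrence: `valOf τ x π 0 = 0`,
`valOf τ x π j = y_j`, the `j`-th smallest of the values `π(x_1),…,π(x_k)`
(which equals `π(x_{τ⁻¹(j)})` for an occurrence of the classical pattern `τ`),
and `n+1` for `j > k`. -/
def valOf {k n : ℕ} (τ : Equiv.Perm (Fin k)) (x : Fin k → Fin n)
    (π : Equiv.Perm (Fin n)) (j : ℕ) : ℕ :=
  if h : 1 ≤ j ∧ j ≤ k then (π (x (τ.symm ⟨j - 1, by omega⟩)) : ℕ) + 1
  else if j = 0 then 0 else n + 1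

/-- `π` (a permutation of length `n`, 0-indexed via `Fin n`) contains the mesh
pattern `(τ, R)`, where boxes in `R` are given with 0-based coordinates in `[0,k]²`.
All positions/values are converted to 1-based via `+1`. -/
def MeshOccursIn {k n : ℕ} (τ : Equiv.Perm (Fin k)) (R : Set (ℕ × ℕ))
    (π : Equiv.Perm (Fin n)) : Prop :=
  ∃ x : Fin k → Fin n, StrictMono x ∧
    (∀ a b : Fin k, π (x a) < π (x b) ↔ τ a < τ b) ∧
    ∀ r ∈ R, ∀ z : Fin n,
      ¬ (posOf x r.1 < (z : ℕ) + 1 ∧ (z : ℕ) + 1 < posOf x (r.1 + 1) ∧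
         valOf τ x π r.2 < (π z : ℕ) + 1 ∧ (π z : ℕ) + 1 < valOf τ x π (r.2 + 1))

/-- `π` avoids the mesh pattern `(τ, R)`. -/
def MeshAvoids {k n : ℕ} (τ : Equiv.Perm (Fin k)) (R : Set (ℕ × ℕ))
    (π : Equiv.Perm (Fin n)) : Prop := ¬ MeshOccursIn τ R π


private def ecnt {n : ℕ} (π : Equiv.Perm (Fin n)) (i : Fin n) : ℕ :=
  (Finset.univ.filter (fun j => j < i ∧ π i < π j)).card

private lemma ecnt_le {n : ℕ} (π : Equiv.Perm (Fin n)) (i : Fin n) : ecnt π i ≤ (i:ℕ) := by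
  have h : (Finset.univ.filter (fun j => j < i ∧ π i < π j)) ⊆ Finset.Iio i := by
    intro j hj; simp at hj ⊢; exact hj.1
  calc _ ≤ (Finset.Iio i).card := Finset.card_le_card h
    _ = (i:ℕ) := by simp

private lemma key {n : ℕ} (π : Equiv.Perm (Fin n)) {i j : Fin n} (hj : j < i) :
    π i < π j ↔ (Finset.univ.filter (fun l => l < i ∧ π j < π l)).card < ecnt π i := by
  set T := Finset.univ.filter (fun l => l < i ∧ π j < π l) with hT
  set S := Finset.univ.filter (fun l => l < i ∧ π i < π l) with hS
  constructor
  · intro h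
    have hsub : T ⊆ S := by
      intro l hl; simp [hT, hS] at hl ⊢; exact ⟨hl.1, h.trans hl.2⟩
    have hjS : j ∈ S := by simp [hS]; exact ⟨hj, h⟩
    have hjT : j ∉ T := by simp [hT]
    exact Finset.card_lt_card (Finset.ssubset_iff_of_subset hsub |>.2 ⟨j, hjS, hjT⟩)
  · intro h
    by_contra hc
    have hne : π j ≠ π i := fun e => absurd (π.injective e) (ne_of_lt hj)
    have hlt : π j < π i := lt_of_le_of_ne (not_lt.1 hc) hne
    have hsub : S ⊆ T := by
      intro l hl; simp [hT, hS] at hl ⊢; exact ⟨hl.1, hlt.trans hl.2⟩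
    exact absurd (Finset.card_le_card hsub) (not_le.2 h)

private lemma iff_flip {n : ℕ} {π σ : Equiv.Perm (Fin n)} {l j : Fin n} (hne : l ≠ j)
    (h : π l < π j ↔ σ l < σ j) : π j < π l ↔ σ j < σ l := by
  have h1 : π j ≠ π l := fun e => hne (π.injective e).symm
  have h2 : σ j ≠ σ l := fun e => hne (σ.injective e).symm
  constructor
  · intro hh
    rcases lt_trichotomy (σ j) (σ l) with h3 | h3 | h3
    · exact h3
    · exact absurd h3 h2
    · exact absurd (h.2 h3) (asymm hh)
  · intro hh
    rcases lt_trichotomy (π j) (π l) with h3 | h3 | h3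
    · exact h3
    · exact absurd h3 h1
    · exact absurd (h.1 h3) (asymm hh)

private lemma ecnt_inj {n : ℕ} {π σ : Equiv.Perm (Fin n)} (h : ∀ i, ecnt π i = ecnt σ i) :
    π = σ := by
  have Q : ∀ m : ℕ, ∀ i : Fin n, (i:ℕ) ≤ m → ∀ j, j < i → (π i < π j ↔ σ i < σ j) := by
    intro m
    induction m with
    | zero =>
      intro i hi j hj
      exact absurd (Fin.lt_def.1 hj) (by omega)
    | succ m IH =>
      intro i hi j hj
      have Q' : ∀ l j : Fin n, l < i → j < i → l ≠ j → (π j < π l ↔ σ j < σ l) := by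
        intro l j hl hjlt hne
        rcases lt_or_gt_of_ne hne with hc | hc
        · exact IH j (by have := Fin.lt_def.1 hjlt; omega) l hc
        · exact iff_flip hne (IH l (by have := Fin.lt_def.1 hl; omega) j hc)
      have hcard : (Finset.univ.filter (fun l => l < i ∧ π j < π l)).card
          = (Finset.univ.filter (fun l => l < i ∧ σ j < σ l)).card := by
        congr 1
        apply Finset.filter_congr
        intro l _
        constructor
        · rintro ⟨h1, h2⟩
          exact ⟨h1, (Q' l j h1 hj (by rintro rfl; exact absurd h2 (lt_irrefl _))).1 h2⟩
        · rintro ⟨h1, h2⟩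
          exact ⟨h1, (Q' l j h1 hj (by rintro rfl; exact absurd h2 (lt_irrefl _))).2 h2⟩
      rw [key π hj, key σ hj, h i, hcard]
  have Qall : ∀ i j : Fin n, (π i < π j ↔ σ i < σ j) := by
    intro i j
    rcases lt_trichotomy j i with hc | rfl | hc
    · exact Q (i:ℕ) i le_rfl j hc
    · exact iff_of_false (lt_irrefl _) (lt_irrefl _)
    · exact iff_flip (ne_of_gt hc) (Q (j:ℕ) j le_rfl i hc)
  have hmono : StrictMono (fun v : Fin n => σ (π.symm v)) := by
    intro a b hab
    have := (Qall (π.symm a) (π.symm b)).1 (by simpa using hab)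
    exact this
  have hid : (fun v : Fin n => σ (π.symm v)) = id := by
    apply (hmono.range_inj strictMono_id).1
    rw [Set.range_id]
    exact Set.range_eq_univ.2 fun v => ⟨π (σ.symm v), by simp⟩
  apply Equiv.ext; intro i
  have := congrFun hid (π i)
  simpa using this.symm

private def codeOf {n : ℕ} (π : Equiv.Perm (Fin n)) : ∀ i : Fin n, Fin ((i:ℕ)+1) :=
  fun i => ⟨ecnt π i, Nat.lt_succ_of_le (ecnt_le π i)⟩

private lemma codeOf_bijective {n : ℕ} :
    Function.Bijective (codeOf (n := n)) := by
  rw [Fintype.bijective_iff_injective_and_card]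
  constructor
  · intro π σ h
    exact ecnt_inj fun i => by
      have := congrFun h i
      simpa [codeOf, Fin.ext_iff] using this
  · rw [Fintype.card_perm, Fintype.card_pi]
    simp only [Fintype.card_fin]
    induction n with
    | zero => simp
    | succ m IH =>
      rw [Fin.prod_univ_castSucc]
      simp only [Fin.coe_castSucc, Fin.val_last]
      rw [← IH, Nat.factorial_succ, mul_comm]

private def Good {n : ℕ} (c : ∀ i : Fin n, Fin ((i:ℕ)+1)) : Prop :=
  ∀ i : ℕ, ∀ h : i + 1 < n, (c ⟨i, by omega⟩ : ℕ) = 0 → (c ⟨i+1, h⟩ : ℕ) ≠ 0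

private def RR : Set (ℕ × ℕ) := {(0,1),(0,2),(1,0),(1,1),(1,2)}

private lemma occurs_iff {n : ℕ} (π : Equiv.Perm (Fin n)) :
    MeshOccursIn (1 : Equiv.Perm (Fin 2)) RR π ↔
      ∃ i : Fin n, ∃ h : (i:ℕ)+1 < n,
        (∀ j, j < i → π j < π i) ∧ π i < π ⟨(i:ℕ)+1, h⟩ := by
  constructor
  · rintro ⟨x, hmono, hord, hbox⟩
    have hx01 : x 0 < x 1 := hmono (by decide : (0:Fin 2) < 1)
    have hπ01 : π (x 0) < π (x 1) := (hord 0 1).2 (by decide)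
    -- adjacent positions
    have hadj : (x 1 : ℕ) = (x 0 : ℕ) + 1 := by
      by_contra hne
      have hlt : (x 0 : ℕ) + 1 < (x 1 : ℕ) := by
        have := Fin.lt_def.1 hx01; omega
      set z : Fin n := ⟨(x 0 : ℕ) + 1, lt_trans hlt (x 1).isLt⟩ with hz
      have hzx0 : z ≠ x 0 := by simp [hz, Fin.ext_iff]
      have hzx1 : z ≠ x 1 := by simp [hz, Fin.ext_iff]; omega
      have hzv : (z : ℕ) = (x 0 : ℕ) + 1 := rfl
      clear_value z
      have b10 := hbox (1,0) (by simp [RR]) z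
      have b11 := hbox (1,1) (by simp [RR]) z
      have b12 := hbox (1,2) (by simp [RR]) z
      simp only [show ((1,0):ℕ×ℕ).1 = 1 from rfl] at b10 b11 b12
      have e1 : posOf x 1 = (x 0 : ℕ) + 1 := rfl
      have e2 : posOf x 2 = (x 1 : ℕ) + 1 := rfl
      have v0 : valOf (1 : Equiv.Perm (Fin 2)) x π 0 = 0 := rfl
      have v1 : valOf (1 : Equiv.Perm (Fin 2)) x π 1 = (π (x 0) : ℕ) + 1 := rfl
      have v2 : valOf (1 : Equiv.Perm (Fin 2)) x π 2 = (π (x 1) : ℕ) + 1 := rfl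
      have v3 : valOf (1 : Equiv.Perm (Fin 2)) x π 3 = n + 1 := rfl
      rw [e1, e2] at b10 b11 b12
      rcases lt_trichotomy (π z) (π (x 0)) with hc | hc | hc
      · exact b10 ⟨by omega, by omega, by rw [v0]; omega, by rw [v1]; exact Nat.add_lt_add_right (Fin.lt_def.1 hc) 1⟩
      · exact hzx0 (π.injective hc)
      · rcases lt_trichotomy (π z) (π (x 1)) with hd | hd | hd
        · exact b11 ⟨by omega, by omega, by rw [v1]; exact Nat.add_lt_add_right (Fin.lt_def.1 hc) 1,
            by rw [v2]; exact Nat.add_lt_add_right (Fin.lt_def.1 hd) 1⟩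
        · exact hzx1 (π.injective hd)
        · exact b12 ⟨by omega, by omega, by rw [v2]; exact Nat.add_lt_add_right (Fin.lt_def.1 hd) 1,
            by rw [v3]; have := (π z).isLt; omega⟩
    -- prefix max
    have hpre : ∀ j, j < x 0 → π j < π (x 0) := by
      intro j hj
      have b01 := hbox (0,1) (by simp [RR]) j
      have b02 := hbox (0,2) (by simp [RR]) j
      have e0 : posOf x 0 = 0 := rfl
      have e1 : posOf x 1 = (x 0 : ℕ) + 1 := rfl
      have v1 : valOf (1 : Equiv.Perm (Fin 2)) x π 1 = (π (x 0) : ℕ) + 1 := rfl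
      have v2 : valOf (1 : Equiv.Perm (Fin 2)) x π 2 = (π (x 1) : ℕ) + 1 := rfl
      have v3 : valOf (1 : Equiv.Perm (Fin 2)) x π 3 = n + 1 := rfl
      rw [e0, e1] at b01
      rw [e0, e1] at b02
      have hjne : j ≠ x 0 := ne_of_lt hj
      rcases lt_trichotomy (π j) (π (x 0)) with hc | hc | hc
      · exact hc
      · exact absurd (π.injective hc) hjne
      · exfalso
        rcases lt_trichotomy (π j) (π (x 1)) with hd | hd | hd
        · exact b01 ⟨by omega, by have := Fin.lt_def.1 hj; omega,
            by rw [v1]; exact Nat.add_lt_add_right (Fin.lt_def.1 hc) 1,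
            by rw [v2]; exact Nat.add_lt_add_right (Fin.lt_def.1 hd) 1⟩
        · exact absurd (π.injective hd) (ne_of_lt (lt_trans hj hx01))
        · exact b02 ⟨by omega, by have := Fin.lt_def.1 hj; omega,
            by rw [v2]; exact Nat.add_lt_add_right (Fin.lt_def.1 hd) 1,
            by rw [v3]; have := (π j).isLt; omega⟩
    refine ⟨x 0, by rw [← hadj]; exact (x 1).isLt, hpre, ?_⟩
    have : (⟨(x 0 : ℕ) + 1, by rw [← hadj]; exact (x 1).isLt⟩ : Fin n) = x 1 :=
      Fin.ext (by simp [hadj])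
    rw [this]; exact hπ01
  · rintro ⟨i, h, hpre, hasc⟩
    refine ⟨![i, ⟨(i:ℕ)+1, h⟩], ?_, ?_, ?_⟩
    · intro a b hab
      fin_cases a <;> fin_cases b <;> first
        | exact absurd hab (by decide)
        | (simp [Fin.lt_def])
    · intro a b
      fin_cases a <;> fin_cases b <;>
        simp only [Matrix.cons_val_zero, Matrix.cons_val_one, Matrix.head_cons, Equiv.Perm.coe_one, id_eq]
      · exact iff_of_false (lt_irrefl _) (by decide)
      · exact iff_of_true hasc (by decide)
      · exact iff_of_false (asymm hasc) (by decide)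
      · exact iff_of_false (lt_irrefl _) (by decide)
    · rintro r hr z
      set x : Fin 2 → Fin n := ![i, ⟨(i:ℕ)+1, h⟩] with hx
      have ex0 : x 0 = i := rfl
      have ex1 : x 1 = ⟨(i:ℕ)+1, h⟩ := rfl
      simp only [RR, Set.mem_insert_iff, Set.mem_singleton_iff] at hr
      have e1 : posOf x 1 = (i : ℕ) + 1 := by rw [show posOf x 1 = (x 0 : ℕ) + 1 from rfl, ex0]
      have e2 : posOf x 2 = (i : ℕ) + 2 := by rw [show posOf x 2 = (x 1 : ℕ) + 1 from rfl, ex1]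
      have v1 : valOf (1 : Equiv.Perm (Fin 2)) x π 1 = (π i : ℕ) + 1 := by
        rw [show valOf (1 : Equiv.Perm (Fin 2)) x π 1 = (π (x 0) : ℕ) + 1 from rfl, ex0]
      have v2 : valOf (1 : Equiv.Perm (Fin 2)) x π 2 = (π (⟨(i:ℕ)+1, h⟩ : Fin n) : ℕ) + 1 := by
        rw [show valOf (1 : Equiv.Perm (Fin 2)) x π 2 = (π (x 1) : ℕ) + 1 from rfl, ex1]
      rcases hr with rfl | rfl | rfl | rfl | rfl
      · -- (0,1)
        rintro ⟨h1, h2, h3, h4⟩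
        rw [e1] at h2
        rw [v1] at h3
        have hzi : z < i := Fin.lt_def.2 (by omega)
        have := hpre z hzi
        have := Fin.lt_def.1 this
        omega
      · -- (0,2)
        rintro ⟨h1, h2, h3, h4⟩
        rw [e1] at h2
        rw [v2] at h3
        have hzi : z < i := Fin.lt_def.2 (by omega)
        have h5 := Fin.lt_def.1 (hpre z hzi)
        have h6 := Fin.lt_def.1 hasc
        omega
      · rintro ⟨h1, h2, _, _⟩; rw [e1] at h1; rw [e2] at h2; omega
      · rintro ⟨h1, h2, _, _⟩; rw [e1] at h1; rw [e2] at h2; omega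
      · rintro ⟨h1, h2, _, _⟩; rw [e1] at h1; rw [e2] at h2; omega

private lemma ecnt_eq_zero {n : ℕ} (π : Equiv.Perm (Fin n)) (i : Fin n) :
    ecnt π i = 0 ↔ ∀ j, j < i → π j < π i := by
  rw [ecnt, Finset.card_eq_zero, Finset.filter_eq_empty_iff]
  constructor
  · intro h j hj
    have := h (Finset.mem_univ j)
    rcases lt_trichotomy (π j) (π i) with hc | hc | hc
    · exact hc
    · exact absurd (π.injective hc) (ne_of_lt hj)
    · exact absurd ⟨hj, hc⟩ this
  · intro h j _
    rintro ⟨hj, hc⟩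
    exact absurd hc (asymm (h j hj))



private def cinit {n : ℕ} (c : ∀ i : Fin (n+1), Fin ((i:ℕ)+1)) (i : Fin n) :
    Fin ((i:ℕ)+1) :=
  ⟨(c ⟨(i:ℕ), by omega⟩ : ℕ), (c ⟨(i:ℕ), by omega⟩).isLt⟩

private def csnoc {n : ℕ} (c : ∀ i : Fin n, Fin ((i:ℕ)+1)) (v : Fin (n+1))
    (i : Fin (n+1)) : Fin ((i:ℕ)+1) :=
  if h : (i:ℕ) < n then ⟨(c ⟨(i:ℕ), h⟩ : ℕ), (c ⟨(i:ℕ), h⟩).isLt⟩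
  else ⟨(v:ℕ), by have h1 := v.isLt; have h2 := i.isLt; omega⟩

private lemma csnoc_val_lt {n : ℕ} (c : ∀ i : Fin n, Fin ((i:ℕ)+1)) (v : Fin (n+1))
    (i : ℕ) (h : i < n) (h2 : i < n+1) :
    ((csnoc c v ⟨i, h2⟩ : Fin (i+1)) : ℕ) = (c ⟨i, h⟩ : ℕ) := by
  show (dite _ _ _ : Fin (i+1)).val = _
  rw [dif_pos h]

private lemma csnoc_val_last {n : ℕ} (c : ∀ i : Fin n, Fin ((i:ℕ)+1)) (v : Fin (n+1))
    (h2 : n < n+1) : ((csnoc c v ⟨n, h2⟩ : Fin (n+1)) : ℕ) = (v:ℕ) := by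
  show (dite _ _ _ : Fin (n+1)).val = _
  rw [dif_neg (lt_irrefl n)]

private lemma cinit_val {n : ℕ} (c : ∀ i : Fin (n+1), Fin ((i:ℕ)+1)) (i : ℕ) (h : i < n)
    (h2 : i < n+1) : ((cinit c ⟨i, h⟩ : Fin (i+1)) : ℕ) = (c ⟨i, h2⟩ : ℕ) := rfl

private lemma good_cinit {n : ℕ} {c : ∀ i : Fin (n+1), Fin ((i:ℕ)+1)} (hg : Good c) :
    Good (cinit c) := by
  intro i h h0
  rw [cinit_val c i (by omega) (by omega)] at h0
  rw [cinit_val c (i+1) h (by omega)]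
  exact hg i (by omega) h0

private lemma cinit_csnoc {n : ℕ} (c : ∀ i : Fin n, Fin ((i:ℕ)+1)) (v : Fin (n+1)) :
    cinit (csnoc c v) = c := by
  funext i
  apply Fin.ext
  rw [show i = (⟨(i:ℕ), i.isLt⟩ : Fin n) from Fin.ext rfl]
  rw [cinit_val _ (i:ℕ) i.isLt (by omega), csnoc_val_lt _ _ (i:ℕ) i.isLt (by omega)]

private lemma csnoc_cinit {n : ℕ} (c : ∀ i : Fin (n+1), Fin ((i:ℕ)+1)) (v : Fin (n+1))
    (hv : (v:ℕ) = (c (Fin.last n) : ℕ)) : csnoc (cinit c) v = c := by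
  funext i
  apply Fin.ext
  rcases Nat.lt_or_ge (i:ℕ) n with h | h
  · rw [show i = (⟨(i:ℕ), i.isLt⟩ : Fin (n+1)) from Fin.ext rfl]
    rw [csnoc_val_lt _ _ (i:ℕ) h (by omega), cinit_val _ (i:ℕ) h (by omega)]
  · have hi : (i:ℕ) = n := by have := i.isLt; omega
    rw [show i = (⟨n, by omega⟩ : Fin (n+1)) from Fin.ext hi]
    rw [csnoc_val_last _ _ (by omega)]
    exact hv

private lemma good_csnoc_ne {n : ℕ} {c : ∀ i : Fin n, Fin ((i:ℕ)+1)} {v : Fin (n+1)}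
    (hv : (v:ℕ) ≠ 0) : Good (csnoc c v) ↔ Good c := by
  constructor
  · intro hg i h h0
    have := hg i (by omega)
    rw [csnoc_val_lt _ _ i (by omega) (by omega), csnoc_val_lt _ _ (i+1) (by omega) (by omega)] at this
    exact this h0
  · intro hg i h h0
    rw [csnoc_val_lt _ _ i (by omega) (by omega)] at h0
    by_cases hlt : i + 1 < n
    · rw [csnoc_val_lt _ _ (i+1) hlt h]
      exact hg i hlt h0
    · have hi : i + 1 = n := by omega
      subst hi
      rw [csnoc_val_last _ _ h]
      exact hv

private lemma good_csnoc_zero {n : ℕ} {c : ∀ i : Fin (n+1), Fin ((i:ℕ)+1)} :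
    Good (csnoc c (0 : Fin (n+2))) ↔ Good c ∧ (c (Fin.last n) : ℕ) ≠ 0 := by
  have hlastc : ∀ h : n < n+1, c (Fin.last n) = c ⟨n, h⟩ := fun _ => rfl
  constructor
  · intro hg
    constructor
    · intro i h h0
      have := hg i (by omega)
      rw [csnoc_val_lt _ _ i (by omega) (by omega), csnoc_val_lt _ _ (i+1) h (by omega)] at this
      exact this h0
    · intro hlast
      have := hg n (by omega)
      rw [csnoc_val_lt _ _ n (by omega) (by omega), csnoc_val_last _ _ (by omega)] at this
      rw [hlastc (by omega)] at hlast
      exact this hlast rfl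
  · rintro ⟨hg, hlast⟩ i h h0
    rw [csnoc_val_lt _ _ i (by omega) (by omega)] at h0
    by_cases hlt : i + 1 < n + 1
    · rw [csnoc_val_lt _ _ (i+1) hlt h]
      exact hg i hlt h0
    · exfalso
      have hi : i = n := by omega
      subst hi
      rw [hlastc (by omega)] at hlast
      exact hlast h0

private lemma avoids_iff_good {n : ℕ} (π : Equiv.Perm (Fin n)) :
    MeshAvoids (1 : Equiv.Perm (Fin 2)) RR π ↔ Good (codeOf π) := by
  rw [MeshAvoids, occurs_iff]
  rw [not_iff_comm]
  constructor
  · intro hng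
    rw [Good] at hng
    push_neg at hng
    obtain ⟨i, hlt, h0, h1⟩ := hng
    refine ⟨⟨i, by omega⟩, hlt, ?_, ?_⟩
    · exact (ecnt_eq_zero π _).1 h0
    · exact (ecnt_eq_zero π ⟨i+1, hlt⟩).1 h1 ⟨i, by omega⟩ (Fin.lt_def.2 (show i < i + 1 by omega))
  · rintro ⟨i, hlt, hpre, hasc⟩ hg
    have h0 : ecnt π i = 0 := (ecnt_eq_zero π i).2 hpre
    have h1 : ecnt π ⟨(i:ℕ)+1, hlt⟩ = 0 := by
      apply (ecnt_eq_zero _ _).2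
      intro j hj
      have hj' : (j:ℕ) < (i:ℕ)+1 := Fin.lt_def.1 hj
      rcases Nat.lt_or_ge (j:ℕ) (i:ℕ) with hc | hc
      · exact lt_trans (hpre j (Fin.lt_def.2 hc)) hasc
      · have hji : j = i := Fin.ext (by omega)
        rw [hji]
        exact hasc
    exact hg (i:ℕ) (by omega) h0 h1

private def E2 {n : ℕ} :
    {c : ∀ i : Fin (n+1), Fin ((i:ℕ)+1) // Good c ∧ ¬ (c (Fin.last n) : ℕ) = 0} ≃
      {c : ∀ i : Fin n, Fin ((i:ℕ)+1) // Good c} × Fin n where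
  toFun c := (⟨cinit c.1, good_cinit c.2.1⟩,
    ⟨(c.1 (Fin.last n) : ℕ) - 1, by
      have h1 := (c.1 (Fin.last n)).isLt
      have h2 := c.2.2
      simp only [Fin.val_last] at h1
      omega⟩)
  invFun p := ⟨csnoc p.1.1 ⟨(p.2:ℕ)+1, by omega⟩, by
    constructor
    · exact (good_csnoc_ne (by simp)).2 p.1.2
    · rw [show Fin.last n = ⟨n, by omega⟩ from rfl, csnoc_val_last _ _ (by omega)]
      simp⟩
  left_inv c := by
    apply Subtype.ext
    apply csnoc_cinit
    have h2 := c.2.2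
    simp only []
    omega
  right_inv p := by
    refine Prod.ext (Subtype.ext (cinit_csnoc _ _)) (Fin.ext ?_)
    show (csnoc (p.1 : ∀ i : Fin n, Fin ((i:ℕ)+1)) ⟨(p.2:ℕ)+1, by omega⟩ ⟨n, by omega⟩ : ℕ) - 1 = (p.2:ℕ)
    rw [csnoc_val_last _ _ (by omega)]
    simp

private def E3 {n : ℕ} :
    {c : ∀ i : Fin (n+2), Fin ((i:ℕ)+1) // Good c ∧ (c (Fin.last (n+1)) : ℕ) = 0} ≃
      {c : ∀ i : Fin (n+1), Fin ((i:ℕ)+1) // Good c ∧ ¬ (c (Fin.last n) : ℕ) = 0} where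
  toFun c := ⟨cinit c.1, good_cinit c.2.1, by
    intro h0
    rw [show Fin.last n = ⟨n, by omega⟩ from rfl] at h0
    rw [cinit_val _ n (by omega) (by omega)] at h0
    exact c.2.1 n (by omega) h0 c.2.2⟩
  invFun c := ⟨csnoc c.1 0, good_csnoc_zero.2 ⟨c.2.1, c.2.2⟩, by
    rw [show Fin.last (n+1) = ⟨n+1, by omega⟩ from rfl, csnoc_val_last _ _ (by omega)]
    rfl⟩
  left_inv c := by
    apply Subtype.ext
    apply csnoc_cinit
    exact c.2.2.symm
  right_inv c := Subtype.ext (cinit_csnoc _ _)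

private noncomputable def splitE {α : Type*} (p q : α → Prop) :
    {a // p a} ≃ {a // p a ∧ q a} ⊕ {a // p a ∧ ¬ q a} := by
  classical
  exact (Equiv.sumCompl (fun a : {a // p a} => q a.1)).symm.trans
    (Equiv.sumCongr (Equiv.subtypeSubtypeEquivSubtypeInter p q)
      (Equiv.subtypeSubtypeEquivSubtypeInter p (fun a => ¬ q a)))

private noncomputable def FF (n : ℕ) : ℕ :=
  Nat.card {c : ∀ i : Fin n, Fin ((i:ℕ)+1) // Good c}

private lemma FF0 : FF 0 = 1 := by
  rw [FF]
  have hall : ∀ c : (∀ i : Fin 0, Fin ((i:ℕ)+1)), Good c := fun c i h => absurd h (by omega)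
  rw [Nat.card_congr (Equiv.subtypeUnivEquiv hall), Nat.card_eq_fintype_card]
  simp

private lemma FF1 : FF 1 = 1 := by
  rw [FF]
  have hall : ∀ c : (∀ i : Fin 1, Fin ((i:ℕ)+1)), Good c := fun c i h => absurd h (by omega)
  rw [Nat.card_congr (Equiv.subtypeUnivEquiv hall), Nat.card_eq_fintype_card]
  simp

private lemma FFrec (n : ℕ) : FF (n+2) = (n+1) * FF (n+1) + n * FF n := by
  rw [FF]
  rw [Nat.card_congr (splitE Good (fun c => (c (Fin.last (n+1)) : ℕ) = 0))]
  rw [Nat.card_sum]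
  rw [Nat.card_congr (E3.trans E2), Nat.card_congr E2]
  rw [Nat.card_prod, Nat.card_prod]
  rw [Nat.card_eq_fintype_card (α := Fin n), Nat.card_eq_fintype_card (α := Fin (n+1))]
  simp only [Fintype.card_fin]
  rw [FF, FF]
  ring

theorem stmt9 (a : ℕ → ℕ)
    (ha : ∀ n, a n = Nat.card {π : Equiv.Perm (Fin n) //
      MeshAvoids (1 : Equiv.Perm (Fin 2)) {(0,1),(0,2),(1,0),(1,1),(1,2)} π}) :
    a 0 = 1 ∧ a 1 = 1 ∧
      ∀ n, 2 ≤ n → a n = (n - 1) * a (n - 1) + (n - 2) * a (n - 2) := by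
  have key : ∀ n, a n = FF n := by
    intro n
    rw [ha n, FF]
    exact Nat.card_congr
      (Equiv.subtypeEquiv (Equiv.ofBijective codeOf codeOf_bijective)
        (fun π => avoids_iff_good π))
  refine ⟨by rw [key]; exact FF0, by rw [key]; exact FF1, ?_⟩
  intro n hn
  obtain ⟨m, rfl⟩ : ∃ m, n = m + 2 := ⟨n - 2, by omega⟩
  rw [key, key, key]
  have e1 : m + 2 - 1 = m + 1 := by omega
  have e2 : m + 2 - 2 = m := by omega
  rw [e1, e2, FFrec]
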